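/- Let q_ε be a smooth solution on [0,1] of ∂_t q_ε = ε ∂²_x( x(1-x) q_ε ) - ∂_x( x(1-x)(x(α-β)+β) q_ε ). Then one has the a priori estimate (1/2) d/dt ∫_0^1 x(1-x) q_ε² dx ≤ ((β-α)/8) ∫_0^1 x(1-x) q_ε² dx, uniformly in ε > 0. Consequently ∫_0^1 x(1-x) q_ε(t,x)² dx ≤ e^{((β-α)/4) t} ∫_0^1 x(1-x) q_ε(0,x)² dx. -/

import Mathlib

open MeasureTheory intervalIntegral Set Metric Real

private lemma aux_integral_pde (α β ε : ℝ) (f : ℝ → ℝ) (hf : ContDiff ℝ 2 f) :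
    (∫ x in (0:ℝ)..1, (x*(1-x)) * (2 * f x *
        (ε * deriv (deriv (fun y => y*(1-y)*f y)) x -
         deriv (fun y => y*(1-y)*(y*(α-β)+β)*f y) x)))
    = -(2*ε) * (∫ x in (0:ℝ)..1, (deriv (fun y => y*(1-y)*f y) x)^2)
      + (β-α) * ∫ x in (0:ℝ)..1, (x*(1-x)*f x)^2 := by
  set u : ℝ → ℝ := fun y => y*(1-y)*f y with hu_def
  have hu : ContDiff ℝ 2 u := (contDiff_id.mul (contDiff_const.sub contDiff_id)).mul hf
  have hud : Differentiable ℝ u := hu.differentiable two_ne_zero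
  have hu2 : ContDiff ℝ (1+1) u := by norm_num; exact hu
  have hu' : ContDiff ℝ 1 (deriv u) := (contDiff_succ_iff_deriv.mp hu2).2.2
  have hu'd : Differentiable ℝ (deriv u) := hu'.differentiable one_ne_zero
  have cu : Continuous u := hu.continuous
  have cu' : Continuous (deriv u) := hu'.continuous
  have cu'' : Continuous (deriv (deriv u)) := hu'.continuous_deriv le_rfl
  have hDu : ∀ x, HasDerivAt u (deriv u x) x := fun x => (hud x).hasDerivAt
  have hDu' : ∀ x, HasDerivAt (deriv u) (deriv (deriv u) x) x := fun x => (hu'd x).hasDerivAt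
  have u0 : u 0 = 0 := by simp [hu_def]
  have u1 : u 1 = 0 := by simp [hu_def]
  set b : ℝ → ℝ := fun y => y*(α-β)+β with hb_def
  have hVu : (fun y => y*(1-y)*(y*(α-β)+β)*f y) = fun y => b y * u y := by
    funext y; simp only [hu_def, hb_def]; ring
  have hDb : ∀ x, HasDerivAt b (α-β) x := by
    intro x
    simpa [hb_def] using ((hasDerivAt_id x).mul_const (α-β)).add_const β
  have hdV : ∀ x, deriv (fun y => y*(1-y)*(y*(α-β)+β)*f y) x
      = (α-β) * u x + b x * deriv u x := by
    intro x; rw [hVu]; exact (((hDb x).mul (hDu x))).deriv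
  have ii : ∀ (g : ℝ → ℝ), Continuous g → IntervalIntegrable g volume (0:ℝ) 1 :=
    fun g hg => hg.intervalIntegrable 0 1
  have IBP1 : (∫ x in (0:ℝ)..1, u x * deriv (deriv u) x)
      = -∫ x in (0:ℝ)..1, (deriv u x)^2 := by
    have h := integral_mul_deriv_eq_deriv_mul (a := (0:ℝ)) (b := 1)
      (fun x _ => hDu x) (fun x _ => hDu' x) (ii _ cu') (ii _ cu'')
    rw [h, u0, u1]
    simp only [zero_mul, sub_zero, zero_sub, neg_inj]
    congr 1; funext x; ring
  have IBP2 : (∫ x in (0:ℝ)..1, b x * (deriv u x * u x + u x * deriv u x))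
      = -((α-β) * ∫ x in (0:ℝ)..1, u x ^ 2) := by
    have h := integral_mul_deriv_eq_deriv_mul (a := (0:ℝ)) (b := 1)
      (u := b) (v := fun x => u x * u x) (u' := fun _ => (α-β))
      (v' := fun x => deriv u x * u x + u x * deriv u x)
      (fun x _ => hDb x) (fun x _ => (hDu x).mul (hDu x))
      (ii _ continuous_const) (ii _ ((cu'.mul cu).add (cu.mul cu')))
    rw [h]
    beta_reduce
    rw [u0, u1, ← intervalIntegral.integral_const_mul]
    simp only [mul_zero, zero_mul, sub_zero, zero_sub, neg_inj]
    congr 1; funext x; ring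
  have cb : Continuous b := by
    rw [hb_def]; exact (continuous_id.mul continuous_const).add continuous_const
  have congr1 : (fun x => (x*(1-x)) * (2 * f x *
        (ε * deriv (deriv u) x - deriv (fun y => y*(1-y)*(y*(α-β)+β)*f y) x)))
      = fun x => (2*ε)*(u x * deriv (deriv u) x)
          - ((2*(α-β))*(u x * u x) + b x * (deriv u x * u x + u x * deriv u x)) := by
    funext x; rw [hdV x]; simp only [hu_def, hb_def]; ring
  rw [congr1]
  rw [intervalIntegral.integral_sub (f := fun x => (2*ε)*(u x * deriv (deriv u) x))
        (g := fun x => (2*(α-β))*(u x * u x) + b x * (deriv u x * u x + u x * deriv u x))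
        ((ii _ ((continuous_const.mul (cu.mul cu'')))))
        (ii _ ((continuous_const.mul (cu.mul cu)).add
          (cb.mul ((cu'.mul cu).add (cu.mul cu'))))),
      intervalIntegral.integral_add (f := fun x => (2*(α-β))*(u x * u x))
        (g := fun x => b x * (deriv u x * u x + u x * deriv u x))
        (ii _ (continuous_const.mul (cu.mul cu)))
        (ii _ (cb.mul ((cu'.mul cu).add (cu.mul cu')))),
      intervalIntegral.integral_const_mul, intervalIntegral.integral_const_mul,
      IBP1, IBP2]
  have e1 : (∫ x in (0:ℝ)..1, u x * u x) = ∫ x in (0:ℝ)..1, u x ^ 2 := by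
    congr 1; funext x; ring
  have e2 : (∫ x in (0:ℝ)..1, u x ^ 2) = ∫ x in (0:ℝ)..1, (x*(1-x)*f x)^2 := rfl
  rw [e1, e2]
  ring

private lemma aux_hasDeriv_pde (q : ℝ → ℝ → ℝ)
    (hreg : ContDiff ℝ 2 (fun z : ℝ × ℝ => q z.1 z.2)) (t₀ : ℝ) :
    HasDerivAt (fun s => ∫ x in (0:ℝ)..1, x * (1 - x) * q s x ^ 2)
      (∫ x in (0:ℝ)..1, x * (1 - x) *
        (2 * q t₀ x * fderiv ℝ (fun z : ℝ × ℝ => q z.1 z.2) (t₀, x) (1, 0))) t₀ := by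
  set Q : ℝ × ℝ → ℝ := fun z => q z.1 z.2 with hQ
  have hQd : Differentiable ℝ Q := hreg.differentiable two_ne_zero
  have cq : Continuous Q := hreg.continuous
  have cqt : Continuous (fun z : ℝ × ℝ => fderiv ℝ Q z (1, 0)) :=
    (hreg.continuous_fderiv two_ne_zero).clm_apply continuous_const
  have hqt : ∀ t x, HasDerivAt (fun s => q s x) (fderiv ℝ Q (t, x) (1, 0)) t := by
    intro t x
    have h2 : HasDerivAt (fun s : ℝ => (s, x)) ((1:ℝ), (0:ℝ)) t :=
      (hasDerivAt_id t).prodMk (hasDerivAt_const t x)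
    exact (hQd (t, x)).hasFDerivAt.comp_hasDerivAt t h2
  set Gt : ℝ × ℝ → ℝ := fun z => z.2 * (1 - z.2) * (2 * Q z * fderiv ℝ Q z (1, 0)) with hGt
  have cGt : Continuous Gt := by
    apply Continuous.mul
    · exact (continuous_snd.mul (continuous_const.sub continuous_snd))
    · exact (continuous_const.mul cq).mul cqt
  have hK : IsCompact (Icc (t₀ - 1) (t₀ + 1) ×ˢ Icc (0:ℝ) 1) :=
    isCompact_Icc.prod isCompact_Icc
  obtain ⟨C, hC⟩ := hK.exists_bound_of_continuousOn cGt.continuousOn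
  have cqx : ∀ s : ℝ, Continuous (fun x => q s x) :=
    fun s => cq.comp (continuous_const.prodMk continuous_id)
  have cF : ∀ s : ℝ, Continuous (fun x : ℝ => x * (1 - x) * q s x ^ 2) :=
    fun s => (continuous_id.mul (continuous_const.sub continuous_id)).mul ((cqx s).pow 2)
  have cGtx : ∀ s : ℝ, Continuous (fun x : ℝ => Gt (s, x)) :=
    fun s => cGt.comp (continuous_const.prodMk continuous_id)
  have main := intervalIntegral.hasDerivAt_integral_of_dominated_loc_of_deriv_le
    (F := fun s x => x * (1 - x) * q s x ^ 2) (F' := fun s x => Gt (s, x))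
    (x₀ := t₀) (a := (0:ℝ)) (b := 1) (μ := volume) (bound := fun _ => C)
    (ball_mem_nhds t₀ one_pos)
    (Filter.Eventually.of_forall (fun s => (cF s).aestronglyMeasurable))
    ((cF t₀).intervalIntegrable 0 1)
    ((cGtx t₀).aestronglyMeasurable)
    ?_ (intervalIntegrable_const) ?_
  · exact main.2
  · refine Filter.Eventually.of_forall (fun x hx s hs => ?_)
    refine hC (s, x) ⟨?_, ?_⟩
    · have := mem_ball_iff_norm.mp hs
      rw [Real.norm_eq_abs, abs_sub_lt_iff] at this
      exact ⟨by linarith [this.1, this.2], by linarith [this.1, this.2]⟩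
    · rw [Set.uIoc_of_le (zero_le_one)] at hx
      exact ⟨hx.1.le, hx.2⟩
  · refine Filter.Eventually.of_forall (fun x _ s _ => ?_)
    have heq : (fun s => x * (1 - x) * q s x ^ 2)
        = (fun s => (x * (1 - x)) * (q s x * q s x)) := by
      funext s; ring
    rw [heq]
    have h : HasDerivAt (fun s => (x * (1 - x)) * (q s x * q s x)) _ s :=
      ((hqt s x).mul (hqt s x)).const_mul (x * (1 - x))
    refine h.congr_deriv ?_
    simp only [hGt, hQ]
    ring

/-- A priori estimate, uniform in `ε > 0`, for smooth solutions of
`∂_t q_ε = ε ∂²_x(x(1-x)q_ε) - ∂_x(x(1-x)(x(α-β)+β) q_ε)`: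
`(1/2) d/dt ∫ x(1-x) q_ε² ≤ ((β-α)/8) ∫ x(1-x) q_ε²`, and consequently
`∫ x(1-x) q_ε(t)² ≤ e^{((β-α)/4)t} ∫ x(1-x) q_ε(0)²`. -/
theorem apriori_estimate_uniform_in_eps
    (α β : ℝ) (hα : α < 0) (hβ : 0 < β) (ε : ℝ) (hε : 0 < ε)
    (q : ℝ → ℝ → ℝ)
    (hreg : ContDiff ℝ 2 (fun z : ℝ × ℝ => q z.1 z.2))
    (hpde : ∀ t : ℝ, 0 ≤ t → ∀ x ∈ Set.Icc (0:ℝ) 1,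
      HasDerivAt (fun s => q s x)
        (ε * deriv (deriv (fun y => y * (1 - y) * q t y)) x -
          deriv (fun y => y * (1 - y) * (y * (α - β) + β) * q t y) x) t) :
    (∀ t : ℝ, 0 ≤ t →
      (1 / 2) * deriv (fun s => ∫ x in (0:ℝ)..1, x * (1 - x) * q s x ^ 2) t ≤
        ((β - α) / 8) * ∫ x in (0:ℝ)..1, x * (1 - x) * q t x ^ 2) ∧
    (∀ t : ℝ, 0 ≤ t →
      ∫ x in (0:ℝ)..1, x * (1 - x) * q t x ^ 2 ≤
        Real.exp (((β - α) / 4) * t) * ∫ x in (0:ℝ)..1, x * (1 - x) * q 0 x ^ 2) := by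
  have hQd : Differentiable ℝ (fun z : ℝ × ℝ => q z.1 z.2) := hreg.differentiable two_ne_zero
  have hqt : ∀ t x, HasDerivAt (fun s => q s x)
      (fderiv ℝ (fun z : ℝ × ℝ => q z.1 z.2) (t, x) (1, 0)) t := by
    intro t x
    have h2 : HasDerivAt (fun s : ℝ => (s, x)) ((1:ℝ), (0:ℝ)) t :=
      (hasDerivAt_id t).prodMk (hasDerivAt_const t x)
    exact (hQd (t, x)).hasFDerivAt.comp_hasDerivAt t h2
  have hqx : ∀ t : ℝ, ContDiff ℝ 2 (fun x => q t x) :=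
    fun t => hreg.comp (contDiff_const.prodMk contDiff_id)
  set F : ℝ → ℝ := fun s => ∫ x in (0:ℝ)..1, x * (1 - x) * q s x ^ 2 with hF
  set G' : ℝ → ℝ := fun t => ∫ x in (0:ℝ)..1, x * (1 - x) *
      (2 * q t x * fderiv ℝ (fun z : ℝ × ℝ => q z.1 z.2) (t, x) (1, 0)) with hG'
  have DF : ∀ t₀ : ℝ, HasDerivAt F (G' t₀) t₀ := fun t₀ => aux_hasDeriv_pde q hreg t₀
  -- identify the derivative value using the PDE for t ≥ 0
  have hval : ∀ t : ℝ, 0 ≤ t →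
      G' t = -(2*ε) * (∫ x in (0:ℝ)..1, (deriv (fun y => y*(1-y)*q t y) x)^2)
        + (β-α) * ∫ x in (0:ℝ)..1, (x*(1-x)*q t x)^2 := by
    intro t ht
    have hcongr : G' t = ∫ x in (0:ℝ)..1, (x*(1-x)) * (2 * q t x *
        (ε * deriv (deriv (fun y => y*(1-y)*q t y)) x -
         deriv (fun y => y*(1-y)*(y*(α-β)+β)*q t y) x)) := by
      apply intervalIntegral.integral_congr
      intro x hx
      rw [Set.uIcc_of_le (zero_le_one)] at hx
      have hu := (hqt t x).unique (hpde t ht x hx)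
      beta_reduce
      rw [hu]
    rw [hcongr]
    exact aux_integral_pde α β ε (q t) (hqx t)
  have hβα : (0:ℝ) < β - α := by linarith
  -- pointwise nonnegativity facts
  have hwx : ∀ x ∈ Icc (0:ℝ) 1, 0 ≤ x * (1-x) := fun x hx =>
    mul_nonneg hx.1 (by linarith [hx.2])
  have Fnn : ∀ t : ℝ, 0 ≤ F t := by
    intro t
    apply intervalIntegral.integral_nonneg zero_le_one
    intro x hx
    exact mul_nonneg (hwx x hx) (sq_nonneg _)
  have key : ∀ t : ℝ, 0 ≤ t → G' t ≤ ((β - α)/4) * F t := by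
    intro t ht
    rw [hval t ht]
    have h1 : 0 ≤ ∫ x in (0:ℝ)..1, (deriv (fun y => y*(1-y)*q t y) x)^2 := by
      apply intervalIntegral.integral_nonneg zero_le_one
      intro x _; exact sq_nonneg _
    have cqx : Continuous (fun x => q t x) := (hqx t).continuous
    have h2 : (∫ x in (0:ℝ)..1, (x*(1-x)*q t x)^2)
        ≤ ∫ x in (0:ℝ)..1, (1/4) * (x * (1-x) * q t x ^ 2) := by
      apply intervalIntegral.integral_mono_on zero_le_one
      · exact (((continuous_id.mul (continuous_const.sub continuous_id)).mul cqx).pow 2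
          ).intervalIntegrable 0 1
      · exact (continuous_const.mul ((continuous_id.mul
          (continuous_const.sub continuous_id)).mul (cqx.pow 2))).intervalIntegrable 0 1
      · intro x hx
        have hw0 : 0 ≤ x * (1-x) := hwx x hx
        have hw4 : x * (1-x) ≤ 1/4 := by nlinarith [sq_nonneg (x - 1/2)]
        nlinarith [mul_nonneg (mul_nonneg (by linarith : (0:ℝ) ≤ 1/4 - x*(1-x)) hw0)
          (sq_nonneg (q t x))]
    have h2' : (∫ x in (0:ℝ)..1, (x*(1-x)*q t x)^2) ≤ (1/4) * F t := by
      rw [hF]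
      rw [← intervalIntegral.integral_const_mul]
      exact h2
    have h3 : (β-α) * (∫ x in (0:ℝ)..1, (x*(1-x)*q t x)^2) ≤ (β-α) * ((1/4) * F t) :=
      mul_le_mul_of_nonneg_left h2' hβα.le
    have h4 : -(2*ε) * (∫ x in (0:ℝ)..1, (deriv (fun y => y*(1-y)*q t y) x)^2) ≤ 0 :=
      mul_nonpos_of_nonpos_of_nonneg (by linarith) h1
    have e : ((β-α)/4) * F t = (β-α) * ((1/4) * F t) := by ring
    rw [e]
    linarith
  constructor
  · intro t ht
    have hd : deriv (fun s => ∫ x in (0:ℝ)..1, x * (1 - x) * q s x ^ 2) t = G' t :=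
      (DF t).deriv
    rw [hd]
    have := key t ht
    have hFt : (∫ x in (0:ℝ)..1, x * (1 - x) * q t x ^ 2) = F t := rfl
    rw [hFt]
    linarith
  · intro t ht
    have cF : ContinuousOn F (Icc 0 t) :=
      fun s _ => ((DF s).continuousAt).continuousWithinAt
    have hg := le_gronwallBound_of_liminf_deriv_right_le (f := F) (f' := G')
      (δ := F 0) (K := (β - α)/4) (ε := 0) (a := 0) (b := t) cF
      (fun s _ r hr => by
        have h := ((DF s).hasDerivWithinAt (s := Ici s)).liminf_right_slope_le hr
        refine h.mono fun z hz => ?_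
        simpa [slope_def_field, div_eq_inv_mul] using hz)
      le_rfl
      (fun s hs => by
        have := key s hs.1
        simpa using this)
      t ⟨ht, le_rfl⟩
    rw [gronwallBound_ε0, sub_zero] at hg
    have hF0 : (∫ x in (0:ℝ)..1, x * (1 - x) * q 0 x ^ 2) = F 0 := rfl
    have hFt : (∫ x in (0:ℝ)..1, x * (1 - x) * q t x ^ 2) = F t := rfl
    rw [hFt, hF0]
    calc F t ≤ F 0 * Real.exp ((β - α)/4 * t) := hg
      _ = Real.exp ((β - α)/4 * t) * F 0 := by ring
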